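/- For all integers n ≥ 1 and k ≥ 1, the number of Catalan words of length n with exactly k runs of weak ascents equals the number of Dyck paths of semilength n having exactly k-1 occurrences of two consecutive up-steps UU whose midpoint lies at even height (the height after the first of the two up-steps is even). -/

import Mathlib

/-- The set of Catalan words of length `n`: words `w` over ℕ with `w 1 = 0` and
`w (i+1) ≤ w i + 1` for all `i`. -/
def CatalanWord (n : ℕ) : Set (List ℕ) :=
  {w | w.length = n ∧ w.getD 0 0 = 0 ∧
    ∀ i, i + 1 < n → w.getD (i + 1) 0 ≤ w.getD i 0 + 1}

/-- Number of runs of weak ascents of `w`: `1 + #{i : w i > w (i+1)}`. -/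
def wAscRuns (w : List ℕ) : ℕ :=
  1 + ((Finset.range (w.length - 1)).filter
    (fun i => w.getD (i + 1) 0 < w.getD i 0)).card

/-- Dyck paths of semilength `n`, encoded as lists of booleans
(`true` = up step `U`, `false` = down step `D`): `2n` steps, `n` of them up,
and every prefix has at least as many up steps as down steps. -/
def DyckPath (n : ℕ) : Set (List Bool) :=
  {p | p.length = 2 * n ∧ p.count true = n ∧
    ∀ i, i ≤ 2 * n → (p.take i).count false ≤ (p.take i).count true}

/-- Number of occurrences of `UU` whose midpoint lies at even height:
indices `i` such that steps `i` and `i+1` are both up steps and the height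
after step `i` is even. -/
def uuEvenMid (p : List Bool) : ℕ :=
  ((Finset.range p.length).filter (fun i =>
    i + 1 < p.length ∧ p.getD i false = true ∧ p.getD (i + 1) false = true ∧
    Even ((p.take (i + 1)).count true - (p.take (i + 1)).count false))).card

namespace CatDyck
open Finset

def desc (w : List ℕ) : ℕ :=
  ((Finset.range (w.length - 1)).filter
    (fun i => w.getD (i + 1) 0 < w.getD i 0)).card

def lastD (w : List ℕ) : ℕ := w.getD (w.length - 1) 0

def cats : ℕ → Finset (List ℕ)
  | 0 => ∅
  | 1 => {[0]}
  | (m+2) => (cats (m+1)).biUnion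
      (fun w => (Finset.range (lastD w + 2)).image (fun x => w ++ [x]))

lemma lastD_append (w : List ℕ) (x : ℕ) : lastD (w ++ [x]) = x := by
  simp [lastD, List.getD_append_right, le_refl]

lemma length_mem_cats : ∀ {m : ℕ} {w : List ℕ}, w ∈ cats m → w.length = m := by
  intro m
  induction m with
  | zero => intro w h; simp [cats] at h
  | succ m ih =>
    intro w h
    rcases Nat.eq_zero_or_pos m with rfl | hm0
    · simp [cats] at h; simp [h]
    · obtain ⟨m', rfl⟩ : ∃ m', m = m' + 1 := ⟨m-1, by omega⟩
      rw [show m' + 1 + 1 = m' + 2 from rfl, cats] at h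
      simp only [Finset.mem_biUnion, Finset.mem_image, Finset.mem_range] at h
      obtain ⟨v, hv, x, _, rfl⟩ := h
      simp [ih hv]

lemma ne_nil_mem_cats {m : ℕ} (hm : 1 ≤ m) {w : List ℕ} (h : w ∈ cats m) : w ≠ [] := by
  have := length_mem_cats h
  intro hw; rw [hw] at this; simp at this; omega

lemma desc_append (w : List ℕ) (hw : w ≠ []) (x : ℕ) :
    desc (w ++ [x]) = desc w + if x < lastD w then 1 else 0 := by
  have hl : w.length ≠ 0 := fun h => hw (List.length_eq_zero_iff.mp h)
  obtain ⟨n, hn⟩ : ∃ n, w.length = n + 1 := ⟨w.length - 1, by omega⟩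
  unfold desc
  rw [List.length_append]
  simp only [List.length_singleton, hn]
  have h1 : n + 1 + 1 - 1 = n + 1 := by omega
  rw [h1, Finset.range_add_one, Finset.filter_insert]
  have hgetD : ∀ i, i < n + 1 → (w ++ [x]).getD i 0 = w.getD i 0 := by
    intro i hi
    exact List.getD_append _ _ _ _ (by omega)
  have hlast : (w ++ [x]).getD (n + 1) 0 = x := by
    rw [List.getD_append_right _ _ _ _ (by omega)]
    simp [hn]
  have hfilter : (Finset.range n).filter (fun i => (w ++ [x]).getD (i+1) 0 < (w ++ [x]).getD i 0)
      = (Finset.range n).filter (fun i => w.getD (i+1) 0 < w.getD i 0) := by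
    apply Finset.filter_congr
    intro i hi
    rw [Finset.mem_range] at hi
    rw [hgetD i (by omega), hgetD (i+1) (by omega)]
  have hn1 : n + 1 - 1 = n := by omega
  have hcond : ((w ++ [x]).getD (n+1) 0 < (w ++ [x]).getD n 0) ↔ (x < lastD w) := by
    rw [hlast, hgetD n (by omega), lastD, hn, hn1]
  by_cases hc : x < lastD w
  · rw [if_pos (hcond.mpr hc), Finset.card_insert_of_notMem (by simp), hfilter,
      if_pos hc, hn1]
  · rw [if_neg (fun hh => hc (hcond.mp hh)), hfilter, if_neg hc, hn1, Nat.add_zero]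

lemma mem_cats_iff : ∀ {m : ℕ}, 1 ≤ m → ∀ {w : List ℕ},
    (w ∈ cats m ↔ w ∈ CatalanWord m) := by
  intro m
  induction m with
  | zero => omega
  | succ m ih =>
    intro _ w
    rcases Nat.eq_zero_or_pos m with rfl | hm0
    · constructor
      · intro h
        simp only [cats, Finset.mem_singleton] at h
        subst h
        exact ⟨rfl, rfl, fun i hi => by omega⟩
      · rintro ⟨h1, h2, _⟩
        obtain ⟨a, rfl⟩ := List.length_eq_one_iff.mp h1
        simp only [cats, Finset.mem_singleton]
        simp only [List.getD] at h2
        simp at h2; simp [h2]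
    · obtain ⟨m', rfl⟩ : ∃ m', m = m' + 1 := ⟨m-1, by omega⟩
      have hm' : 1 ≤ m' + 1 := by omega
      rw [show m' + 1 + 1 = m' + 2 from rfl, cats]
      constructor
      · intro h
        simp only [Finset.mem_biUnion, Finset.mem_image, Finset.mem_range] at h
        obtain ⟨v, hv, x, hx, rfl⟩ := h
        obtain ⟨hvl, hv0, hvs⟩ := (ih hm').mp hv
        refine ⟨by simp [hvl], ?_, ?_⟩
        · rw [List.getD_append _ _ _ _ (by omega)]; exact hv0
        · intro i hi
          rcases Nat.lt_or_ge (i+1) (m'+1) with h'|h'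
          · rw [List.getD_append _ _ _ _ (by omega), List.getD_append _ _ _ _ (by omega)]
            exact hvs i h'
          · have hie : i = m' := by omega
            subst hie
            rw [List.getD_append_right _ _ _ _ (by omega), List.getD_append _ _ _ _ (by omega)]
            have hvv : x ≤ lastD v + 1 := by omega
            rw [lastD, hvl] at hvv
            simpa [hvl] using hvv
      · rintro ⟨h1, h2, h3⟩
        have hne : w ≠ [] := by intro h; rw [h] at h1; simp at h1
        have hdec := List.dropLast_append_getLast hne
        set v := w.dropLast with hv
        set x := w.getLast hne with hx
        have hvl : v.length = m' + 1 := by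
          rw [hv, List.length_dropLast, h1]; omega
        have hgd : ∀ i, i < m' + 1 → w.getD i 0 = v.getD i 0 := by
          intro i hi
          conv_lhs => rw [← hdec]
          rw [List.getD_append _ _ _ _ (by omega)]
        have hgx : w.getD (m' + 1) 0 = x := by
          conv_lhs => rw [← hdec]
          rw [List.getD_append_right _ _ _ _ (by omega)]
          simp [hvl]
        simp only [Finset.mem_biUnion, Finset.mem_image, Finset.mem_range]
        refine ⟨v, ?_, x, ?_, hdec⟩
        · rw [ih hm']
          refine ⟨hvl, ?_, ?_⟩
          · rw [← hgd 0 (by omega)]; exact h2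
          · intro i hi
            rw [← hgd i (by omega), ← hgd (i+1) (by omega)]
            exact h3 i (by omega)
        · have h4 := h3 m' (by omega)
          rw [hgx, hgd m' (by omega)] at h4
          have : x ≤ lastD v + 1 := by
            rw [lastD, hvl]; simpa using h4
          omega

lemma lastD_lt_mem_cats : ∀ {m : ℕ} {w : List ℕ}, w ∈ cats m → lastD w < m := by
  intro m
  induction m with
  | zero => intro w h; simp [cats] at h
  | succ m ih =>
    intro w h
    rcases Nat.eq_zero_or_pos m with rfl | hm0
    · simp [cats] at h; simp [h, lastD]
    · obtain ⟨m', rfl⟩ : ∃ m', m = m' + 1 := ⟨m-1, by omega⟩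
      rw [show m' + 1 + 1 = m' + 2 from rfl, cats] at h
      simp only [Finset.mem_biUnion, Finset.mem_image, Finset.mem_range] at h
      obtain ⟨v, hv, x, hx, rfl⟩ := h
      have := ih hv
      rw [lastD_append]
      omega

def A (m k l : ℕ) : ℕ :=
  ((cats m).filter (fun w => desc w = k ∧ lastD w = l)).card

lemma cats_split (m : ℕ) (hm : 1 ≤ m) (P : List ℕ → Prop) [DecidablePred P] :
    ((cats (m+1)).filter P).card
      = ∑ w ∈ cats m, ((Finset.range (lastD w + 2)).filter (fun x => P (w ++ [x]))).card := by
  obtain ⟨m', rfl⟩ : ∃ m', m = m' + 1 := ⟨m-1, by omega⟩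
  rw [show m' + 1 + 1 = m' + 2 from rfl, cats, Finset.filter_biUnion]
  rw [Finset.card_biUnion]
  · apply Finset.sum_congr rfl
    intro w hw
    rw [Finset.filter_image]
    rw [Finset.card_image_of_injective _ (fun a b h => by simpa using h)]
  · intro w hw w' hw' hne
    simp only [Finset.disjoint_left]
    intro a ha ha'
    simp only [Finset.mem_filter, Finset.mem_image, Finset.mem_range] at ha ha'
    obtain ⟨⟨x, hx, rfl⟩, -⟩ := ha
    obtain ⟨⟨x', hx', heq⟩, -⟩ := ha'
    have hlen : w'.length = w.length := by
      rw [length_mem_cats hw, length_mem_cats hw']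
    have := List.append_inj_left heq (by simp [hlen])
    exact hne this.symm

lemma card_filter_eq_ite {N x : ℕ} (Q : ℕ → Prop) [DecidablePred Q] :
    ((Finset.range N).filter (fun y => Q y ∧ y = x)).card
      = if x < N ∧ Q x then 1 else 0 := by
  split_ifs with h
  · rw [Finset.card_eq_one]
    refine ⟨x, ?_⟩
    ext y
    simp only [Finset.mem_filter, Finset.mem_range, Finset.mem_singleton]
    constructor
    · rintro ⟨-, -, rfl⟩; rfl
    · rintro rfl; exact ⟨h.1, h.2, rfl⟩
  · rw [Finset.card_eq_zero]
    ext y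
    simp only [Finset.mem_filter, Finset.mem_range, Finset.notMem_empty, iff_false, not_and]
    intro hy hQ hyx
    exact h (by subst hyx; exact ⟨hy, hQ⟩)

lemma A_succ (m : ℕ) (hm : 1 ≤ m) (k x : ℕ) :
    A (m+1) k x = ∑ l ∈ Finset.range m,
      (if x ≤ l + 1 then
        (if x < l then (if 1 ≤ k then A m (k-1) l else 0) else A m k l)
       else 0) := by
  rw [A, cats_split m hm]
  have step1 : ∀ w ∈ cats m,
      ((Finset.range (lastD w + 2)).filter (fun y => desc (w ++ [y]) = k ∧ lastD (w ++ [y]) = x)).card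
      = if x ≤ lastD w + 1 ∧ desc w + (if x < lastD w then 1 else 0) = k then 1 else 0 := by
    intro w hw
    have hne := ne_nil_mem_cats hm hw
    have : ((Finset.range (lastD w + 2)).filter
        (fun y => desc (w ++ [y]) = k ∧ lastD (w ++ [y]) = x)).card
        = ((Finset.range (lastD w + 2)).filter
        (fun y => (desc w + (if y < lastD w then 1 else 0) = k) ∧ y = x)).card := by
      congr 1
      apply Finset.filter_congr
      intro y hy
      rw [desc_append w hne y, lastD_append]
    rw [this, card_filter_eq_ite]
    congr 1
    rw [eq_iff_iff]
    constructor
    · rintro ⟨h1, h2⟩; exact ⟨by omega, h2⟩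
    · rintro ⟨h1, h2⟩; exact ⟨by omega, h2⟩
  rw [Finset.sum_congr rfl step1]
  -- now partition the sum over cats m by lastD
  have fib : ∀ w ∈ cats m, lastD w ∈ Finset.range m := by
    intro w hw; exact Finset.mem_range.mpr (lastD_lt_mem_cats hw)
  rw [show (∑ w ∈ cats m, if x ≤ lastD w + 1 ∧ desc w + (if x < lastD w then 1 else 0) = k then 1 else 0)
      = ∑ w ∈ cats m, ∑ l ∈ Finset.range m, (if lastD w = l then
          (if x ≤ l + 1 ∧ desc w + (if x < l then 1 else 0) = k then 1 else 0) else 0) by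
    apply Finset.sum_congr rfl
    intro w hw
    rw [Finset.sum_eq_single_of_mem (lastD w) (fib w hw)]
    · simp
    · intro l _ hl
      rw [if_neg (fun h => hl h.symm)]]
  rw [Finset.sum_comm]
  apply Finset.sum_congr rfl
  intro l hl
  -- fix l; sum over w
  have : (∑ w ∈ cats m, if lastD w = l then
      (if x ≤ l + 1 ∧ desc w + (if x < l then 1 else 0) = k then 1 else 0) else 0)
      = ((cats m).filter (fun w => lastD w = l ∧ x ≤ l + 1 ∧ desc w + (if x < l then 1 else 0) = k)).card := by
    rw [Finset.card_filter]
    apply Finset.sum_congr rfl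
    intro w _
    by_cases h1 : lastD w = l <;> by_cases h2 : x ≤ l + 1 ∧ desc w + (if x < l then 1 else 0) = k <;>
      simp [h1, h2]
  rw [this]
  by_cases hx1 : x ≤ l + 1
  swap
  · rw [if_neg hx1, Finset.card_eq_zero, Finset.filter_eq_empty_iff]
    intro w _ h
    exact hx1 h.2.1
  rw [if_pos hx1]
  by_cases hx2 : x < l
  · simp only [if_pos hx2]
    by_cases hk : 1 ≤ k
    · rw [if_pos hk, A]
      congr 1
      apply Finset.filter_congr
      intro w _
      constructor
      · rintro ⟨h1, -, h2⟩; exact ⟨by omega, h1⟩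
      · rintro ⟨h1, h2⟩; exact ⟨h2, hx1, by omega⟩
    · rw [if_neg hk, Finset.card_eq_zero, Finset.filter_eq_empty_iff]
      intro w _ h
      omega
  · simp only [if_neg hx2]
    rw [A]
    congr 1
    apply Finset.filter_congr
    intro w _
    constructor
    · rintro ⟨h1, -, h2⟩; exact ⟨by omega, h1⟩
    · rintro ⟨h1, h2⟩; exact ⟨h2, hx1, by omega⟩

lemma A_eq_zero_of_le {m k l : ℕ} (h : m ≤ l) : A m k l = 0 := by
  rw [A, Finset.card_eq_zero, Finset.filter_eq_empty_iff]
  intro w hw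
  rintro ⟨-, rfl⟩
  exact absurd (lastD_lt_mem_cats hw) (by omega)

lemma sum_range_choose_eq (l s : ℕ) :
    ∑ x ∈ Finset.range l, Nat.choose x s = Nat.choose l (s+1) := by
  induction l with
  | zero => simp
  | succ l ih =>
    rw [Finset.sum_range_succ, ih, Nat.choose_succ_succ]
    simp only [Nat.succ_eq_add_one]
    omega

def hgt (p : List Bool) : ℕ := p.count true - p.count false
def lastB (p : List Bool) : Bool := p.getD (p.length - 1) false

def dps : ℕ → Finset (List Bool)
  | 0 => {[]}
  | (m+1) => (dps m).biUnion (fun p =>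
      ((Finset.univ : Finset (Bool × Bool)).filter
        (fun c => c.1 = true ∨ 1 ≤ hgt p)).image (fun c => p ++ [c.1, c.2]))

def B (m k s : ℕ) (b : Bool) : ℕ :=
  ((dps m).filter (fun p => uuEvenMid p = k ∧ hgt p = 2*s ∧ lastB p = b)).card

lemma count_tf (p : List Bool) : p.count true + p.count false = p.length := by
  induction p with
  | nil => simp
  | cons a t ih =>
    cases a <;> simp [List.count_cons] <;> omega

def ok (p : List Bool) : Prop :=
  ∀ i, (p.take i).count false ≤ (p.take i).count true

lemma ok_self {p : List Bool} (h : ok p) : p.count false ≤ p.count true := by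
  have := h p.length
  rwa [List.take_length] at this

lemma take_app2_left (q : List Bool) (a b : Bool) {i : ℕ} (hi : i ≤ q.length) :
    (q ++ [a, b]).take i = q.take i :=
  List.take_append_of_le_length hi

lemma take_app2_mid (q : List Bool) (a b : Bool) :
    (q ++ [a, b]).take (q.length + 1) = q ++ [a] := by
  rw [show q ++ [a, b] = (q ++ [a]) ++ [b] by simp]
  rw [show q.length + 1 = (q ++ [a]).length by simp]
  rw [List.take_left]

lemma take_app2_all (q : List Bool) (a b : Bool) {i : ℕ} (hi : q.length + 2 ≤ i) :
    (q ++ [a, b]).take i = q ++ [a, b] :=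
  List.take_of_length_le (by simp; omega)

lemma mem_dps_iff : ∀ {m : ℕ} {p : List Bool},
    p ∈ dps m ↔ (p.length = 2*m ∧ ok p) := by
  intro m
  induction m with
  | zero =>
    intro p
    simp only [dps, Finset.mem_singleton]
    constructor
    · rintro rfl; exact ⟨rfl, fun i => by simp⟩
    · rintro ⟨h, -⟩; exact List.length_eq_zero_iff.mp (by omega)
  | succ m ih =>
    intro p
    rw [dps]
    simp only [Finset.mem_biUnion, Finset.mem_image, Finset.mem_filter, Finset.mem_univ,
      true_and]
    constructor
    · rintro ⟨q, hq, c, hc, rfl⟩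
      obtain ⟨hlen, hok⟩ := ih.mp hq
      have hct := count_tf q
      have hcf : q.count false ≤ q.count true := ok_self hok
      refine ⟨by simp [hlen]; omega, ?_⟩
      intro i
      rcases le_or_gt i q.length with hi2 | hi2
      · rw [take_app2_left q _ _ hi2]; exact hok i
      rcases lt_or_ge i (q.length + 2) with hi3 | hi3
      · have : i = q.length + 1 := by omega
        subst this
        rw [take_app2_mid]
        rcases hc with hc | hc
        · rcases c with ⟨c1, c2⟩
          simp only at hc
          subst hc
          simp [List.count_append]
          omega
        · simp only [hgt] at hc
          rcases c with ⟨c1, c2⟩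
          cases c1 <;> simp [List.count_append] <;> omega
      · rw [take_app2_all q _ _ hi3]
        rcases c with ⟨c1, c2⟩
        rcases hc with hc | hc
        · simp only at hc
          subst hc
          cases c2 <;> simp [List.count_append] <;> omega
        · simp only [hgt] at hc
          cases c1 <;> cases c2 <;> simp [List.count_append] <;> omega
    · rintro ⟨hlen, hok⟩
      set q := p.take (2*m) with hqdef
      have hql : q.length = 2*m := by
        rw [hqdef, List.length_take]; omega
      have hrest : (p.drop (2*m)).length = 2 := by
        rw [List.length_drop]; omega
      obtain ⟨a, b, hab⟩ := List.length_eq_two.mp hrest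
      have hdec : q ++ [a, b] = p := by
        rw [hqdef, ← hab]; exact List.take_append_drop _ _
      have hokq : ok q := by
        intro i
        rw [hqdef, List.take_take]
        exact hok _
      have hq : q ∈ dps m := ih.mpr ⟨hql, hokq⟩
      have hct := count_tf q
      refine ⟨q, hq, (a, b), ?_, by rw [hdec]⟩
      rcases a with _ | _
      · right
        have h1 := hok (2*m + 1)
        rw [← hdec] at h1
        rw [show (2:ℕ)*m = q.length by omega] at h1
        rw [take_app2_mid] at h1
        simp [List.count_append] at h1
        simp only [hgt]
        omega
      · left; rfl

lemma length_mem_dps {m : ℕ} {p : List Bool} (h : p ∈ dps m) : p.length = 2*m :=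
  (mem_dps_iff.mp h).1

lemma ok_mem_dps {m : ℕ} {p : List Bool} (h : p ∈ dps m) : ok p :=
  (mem_dps_iff.mp h).2


lemma getD_app2_left (q : List Bool) (a b : Bool) {i : ℕ} (hi : i < q.length) :
    (q ++ [a, b]).getD i false = q.getD i false :=
  List.getD_append _ _ _ _ hi

lemma getD_app2_mid (q : List Bool) (a b : Bool) :
    (q ++ [a, b]).getD q.length false = a := by
  rw [List.getD_append_right _ _ _ _ (le_refl _)]
  simp

lemma getD_app2_last (q : List Bool) (a b : Bool) :
    (q ++ [a, b]).getD (q.length + 1) false = b := by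
  rw [List.getD_append_right _ _ _ _ (by omega)]
  simp

lemma occ_append2 {m : ℕ} {q : List Bool} (hq : q ∈ dps m) (a b : Bool) :
    uuEvenMid (q ++ [a, b])
      = uuEvenMid q + (if lastB q = true ∧ a = true then 1 else 0) := by
  have hlen := length_mem_dps hq
  have hok := ok_mem_dps hq
  have hct := count_tf q
  have hcf : q.count false ≤ q.count true := ok_self hok
  set ct := q.count true with hctd
  set cf := q.count false with hcfd
  have heven : Even (ct - cf) := ⟨m - cf, by omega⟩
  set L := q ++ [a, b] with hL
  have hLlen : L.length = 2*m + 2 := by simp [hL, hlen]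
  rw [uuEvenMid]
  rw [show Finset.range L.length = insert (2*m+1) (Finset.range (2*m+1)) by
    rw [hLlen, show 2*m+2 = (2*m+1)+1 from rfl, Finset.range_add_one]]
  rw [Finset.filter_insert, if_neg (by
    rintro ⟨h1, -⟩
    rw [hLlen] at h1
    omega)]
  -- peel index 2m
  rw [show Finset.range (2*m+1) = insert (2*m) (Finset.range (2*m)) from Finset.range_add_one,
    Finset.filter_insert]
  have hmid : ¬ ((2*m) + 1 < L.length ∧ L.getD (2*m) false = true ∧
      L.getD (2*m + 1) false = true ∧
      Even ((L.take (2*m + 1)).count true - (L.take (2*m + 1)).count false)) := by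
    rintro ⟨-, h2, -, h4⟩
    rw [hL, ← hlen] at h2
    rw [getD_app2_mid] at h2
    subst h2
    rw [hL, show 2*m+1 = q.length + 1 by omega, take_app2_mid] at h4
    simp [List.count_append, ← hctd, ← hcfd] at h4
    rw [show ct + 1 - cf = (ct - cf) + 1 by omega, Nat.even_add_one] at h4
    exact h4 heven
  rw [if_neg hmid]
  -- cases on m
  rcases Nat.eq_zero_or_pos m with rfl | hm
  · have hq0 : q = [] := List.length_eq_zero_iff.mp (by omega)
    subst hq0
    simp [uuEvenMid, lastB]
  obtain ⟨m', rfl⟩ : ∃ m', m = m' + 1 := ⟨m-1, by omega⟩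
  -- peel index 2m-1 = 2m'+1
  rw [show Finset.range (2*(m'+1)) = insert (2*m'+1) (Finset.range (2*m'+1)) by
    rw [show 2*(m'+1) = (2*m'+1)+1 from rfl, Finset.range_add_one]]
  rw [Finset.filter_insert]
  have hbdy : ((2*m'+1) + 1 < L.length ∧ L.getD (2*m'+1) false = true ∧
      L.getD (2*m'+1 + 1) false = true ∧
      Even ((L.take (2*m'+1 + 1)).count true - (L.take (2*m'+1 + 1)).count false))
      ↔ (lastB q = true ∧ a = true) := by
    have e1 : L.getD (2*m'+1) false = lastB q := by
      rw [hL, getD_app2_left q a b (by omega), lastB, hlen,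
        show 2*(m'+1) - 1 = 2*m'+1 by omega]
    have e2 : L.getD (2*m'+1+1) false = a := by
      rw [hL, show 2*m'+1+1 = q.length by omega, getD_app2_mid]
    have e3 : (L.take (2*m'+1+1)) = q := by
      rw [hL, take_app2_left q a b (by omega), List.take_of_length_le (by omega)]
    rw [e1, e2, e3]
    constructor
    · rintro ⟨-, h2, h3, -⟩; exact ⟨h2, h3⟩
    · rintro ⟨h2, h3⟩
      exact ⟨by rw [hLlen]; omega, h2, h3, by rw [← hctd, ← hcfd]; exact heven⟩
  -- interior indices agree with those of q
  have hfilt : (Finset.range (2*m'+1)).filter (fun i =>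
      i + 1 < L.length ∧ L.getD i false = true ∧ L.getD (i+1) false = true ∧
      Even ((L.take (i+1)).count true - (L.take (i+1)).count false))
      = (Finset.range (2*m'+1)).filter (fun i =>
      i + 1 < q.length ∧ q.getD i false = true ∧ q.getD (i+1) false = true ∧
      Even ((q.take (i+1)).count true - (q.take (i+1)).count false)) := by
    apply Finset.filter_congr
    intro i hi
    rw [Finset.mem_range] at hi
    have d1 : L.getD i false = q.getD i false := getD_app2_left q a b (by omega)
    have d2 : L.getD (i+1) false = q.getD (i+1) false := getD_app2_left q a b (by omega)
    have d3 : L.take (i+1) = q.take (i+1) := take_app2_left q a b (by omega)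
    rw [d1, d2, d3, hLlen, hlen]
    constructor
    · rintro ⟨-, h⟩; exact ⟨by omega, h⟩
    · rintro ⟨-, h⟩; exact ⟨by omega, h⟩
  have hocc : uuEvenMid q = ((Finset.range (2*m'+1)).filter (fun i =>
      i + 1 < q.length ∧ q.getD i false = true ∧ q.getD (i+1) false = true ∧
      Even ((q.take (i+1)).count true - (q.take (i+1)).count false))).card := by
    rw [uuEvenMid, hlen, show 2*(m'+1) = (2*m'+1)+1 from rfl, Finset.range_add_one,
      Finset.filter_insert, if_neg (by rintro ⟨h1, -⟩; omega)]
  by_cases hcond : lastB q = true ∧ a = true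
  · rw [if_pos (hbdy.mpr hcond), if_pos hcond,
      Finset.card_insert_of_notMem (by simp), hfilt, hocc]
  · rw [if_neg (fun h => hcond (hbdy.mp h)), if_neg hcond, hfilt, hocc]
    omega


lemma lastB_app2 (q : List Bool) (a b : Bool) : lastB (q ++ [a, b]) = b := by
  rw [lastB, show (q ++ [a, b]).length - 1 = q.length + 1 by simp]
  exact getD_app2_last q a b

lemma dps_split (m : ℕ) (P : List Bool → Prop) [DecidablePred P] :
    ((dps (m+1)).filter P).card
      = ∑ q ∈ dps m, ∑ c ∈ (Finset.univ : Finset (Bool × Bool)),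
          (if (c.1 = true ∨ 1 ≤ hgt q) ∧ P (q ++ [c.1, c.2]) then 1 else 0) := by
  rw [dps, Finset.filter_biUnion, Finset.card_biUnion]
  · apply Finset.sum_congr rfl
    intro q hq
    rw [Finset.filter_image, Finset.card_image_of_injective _ (fun c c' h => by
      rcases c with ⟨c1, c2⟩; rcases c' with ⟨c1', c2'⟩
      simp only [List.append_cancel_left_eq, List.cons.injEq, and_true] at h
      simp [h.1, h.2])]
    rw [Finset.filter_filter, Finset.card_filter]
  · intro q hq q' hq' hne
    simp only [Finset.disjoint_left]
    intro a ha ha'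
    simp only [Finset.mem_filter, Finset.mem_image, Finset.mem_univ, true_and] at ha ha'
    obtain ⟨⟨c, -, rfl⟩, -⟩ := ha
    obtain ⟨⟨c', -, heq⟩, -⟩ := ha'
    have hlen : q'.length = q.length := by
      rw [length_mem_dps hq, length_mem_dps hq']
    exact hne (List.append_inj_left heq (by simp [hlen])).symm

lemma card_filter_split_lastB (t : Finset (List Bool)) (P : List Bool → Prop)
    [DecidablePred P] :
    (t.filter P).card = (t.filter (fun q => P q ∧ lastB q = true)).card
      + (t.filter (fun q => P q ∧ lastB q = false)).card := by
  rw [← Finset.filter_filter, ← Finset.filter_filter]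
  rw [← Finset.card_filter_add_card_filter_not
    (s := t.filter P) (p := fun q => lastB q = true)]
  congr 2
  ext q
  simp [Bool.not_eq_true]

lemma univ_bb : (Finset.univ : Finset (Bool × Bool))
    = {(true,true),(true,false),(false,true),(false,false)} := by decide

lemma B_zero (k s : ℕ) (b : Bool) :
    B 0 k s b = if k = 0 ∧ s = 0 ∧ b = false then 1 else 0 := by
  rw [B, show dps 0 = {[]} from rfl]
  rw [Finset.filter_singleton]
  have h1 : uuEvenMid ([] : List Bool) = 0 := by decide
  have h2 : hgt ([] : List Bool) = 0 := by decide
  have h3 : lastB ([] : List Bool) = false := by decide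
  rw [h1, h2, h3]
  by_cases hk : k = 0 <;> by_cases hs : s = 0 <;> rcases b <;>
    simp [hk, hs] <;> omega

lemma B_split (m k s : ℕ) (b : Bool) :
    B (m+1) k s b
      = (∑ q ∈ dps m, if uuEvenMid q + (if lastB q = true then 1 else 0) = k
            ∧ hgt (q ++ [true, true]) = 2*s ∧ (true = b) then 1 else 0)
      + (∑ q ∈ dps m, if uuEvenMid q + (if lastB q = true then 1 else 0) = k
            ∧ hgt (q ++ [true, false]) = 2*s ∧ (false = b) then 1 else 0)
      + (∑ q ∈ dps m, if 1 ≤ hgt q ∧ uuEvenMid q = k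
            ∧ hgt (q ++ [false, true]) = 2*s ∧ (true = b) then 1 else 0)
      + (∑ q ∈ dps m, if 1 ≤ hgt q ∧ uuEvenMid q = k
            ∧ hgt (q ++ [false, false]) = 2*s ∧ (false = b) then 1 else 0) := by
  rw [B, dps_split]
  rw [← Finset.sum_add_distrib, ← Finset.sum_add_distrib, ← Finset.sum_add_distrib]
  apply Finset.sum_congr rfl
  intro q hq
  rw [show (Finset.univ : Finset (Bool × Bool))
    = insert (true,true) (insert (true,false) (insert (false,true) {(false,false)}))
    from by decide]
  rw [Finset.sum_insert (by decide), Finset.sum_insert (by decide),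
    Finset.sum_insert (by decide), Finset.sum_singleton]
  have ho : ∀ a b' : Bool, uuEvenMid (q ++ [a, b'])
      = uuEvenMid q + (if lastB q = true ∧ a = true then 1 else 0) :=
    fun a b' => occ_append2 hq a b'
  have hl : ∀ a b' : Bool, lastB (q ++ [a, b']) = b' := lastB_app2 q
  simp only [ho, hl, eq_self_iff_true, and_true, true_and, true_or, false_or,
    Bool.false_eq_true, and_false, if_false, ite_false, add_zero]
  ring


lemma hgt_facts {m : ℕ} {q : List Bool} (hq : q ∈ dps m) :
    q.count true + q.count false = 2*m ∧ q.count false ≤ q.count true := by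
  refine ⟨?_, ok_self (ok_mem_dps hq)⟩
  rw [count_tf q, length_mem_dps hq]

lemma sum_ite_B (m k' s' : ℕ) (bb : Bool) :
    (∑ q ∈ dps m, if uuEvenMid q = k' ∧ hgt q = 2*s' ∧ lastB q = bb then 1 else 0)
      = B m k' s' bb := by
  rw [B, Finset.card_filter]

lemma split_occ_sum (m k s' : ℕ) :
    (∑ q ∈ dps m, if uuEvenMid q + (if lastB q = true then 1 else 0) = k
        ∧ hgt q = 2*s' then 1 else 0)
      = (if 1 ≤ k then B m (k-1) s' true else 0) + B m k s' false := by
  rw [show (∑ q ∈ dps m, if uuEvenMid q + (if lastB q = true then 1 else 0) = k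
        ∧ hgt q = 2*s' then 1 else 0)
      = ((dps m).filter (fun q => uuEvenMid q + (if lastB q = true then 1 else 0) = k
        ∧ hgt q = 2*s')).card from (Finset.card_filter _ _).symm]
  rw [card_filter_split_lastB]
  congr 1
  · -- lastB = true piece
    rcases k with _ | k'
    · rw [if_neg (by omega), Finset.card_eq_zero, Finset.filter_eq_empty_iff]
      rintro q _ ⟨⟨h1, -⟩, h3⟩
      rw [if_pos h3] at h1
      omega
    · rw [if_pos (by omega), show k' + 1 - 1 = k' from rfl, B]
      congr 1
      apply Finset.filter_congr
      intro q _
      constructor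
      · rintro ⟨⟨h1, h2⟩, h3⟩
        rw [if_pos h3] at h1
        exact ⟨by omega, h2, h3⟩
      · rintro ⟨h1, h2, h3⟩
        exact ⟨⟨by rw [if_pos h3]; omega, h2⟩, h3⟩
  · -- lastB = false piece
    rw [B]
    congr 1
    apply Finset.filter_congr
    intro q _
    constructor
    · rintro ⟨⟨h1, h2⟩, h3⟩
      rw [if_neg (by rw [h3]; exact Bool.false_ne_true)] at h1
      exact ⟨by omega, h2, h3⟩
    · rintro ⟨h1, h2, h3⟩
      exact ⟨⟨by rw [if_neg (by rw [h3]; exact Bool.false_ne_true)]; omega, h2⟩, h3⟩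

lemma B_succ_false (m k s : ℕ) :
    B (m+1) k s false
      = ((if 1 ≤ k then B m (k-1) s true else 0) + B m k s false)
        + (B m k (s+1) true + B m k (s+1) false) := by
  rw [B_split]
  have e1 : (∑ q ∈ dps m, if uuEvenMid q + (if lastB q = true then 1 else 0) = k
      ∧ hgt (q ++ [true, true]) = 2*s ∧ (true = false) then 1 else 0) = 0 := by
    apply Finset.sum_eq_zero
    intro q _
    simp
  have e3 : (∑ q ∈ dps m, if 1 ≤ hgt q ∧ uuEvenMid q = k
      ∧ hgt (q ++ [false, true]) = 2*s ∧ (true = false) then 1 else 0) = 0 := by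
    apply Finset.sum_eq_zero
    intro q _
    simp
  rw [e1, e3]
  have e2 : (∑ q ∈ dps m, if uuEvenMid q + (if lastB q = true then 1 else 0) = k
      ∧ hgt (q ++ [true, false]) = 2*s ∧ (false = false) then 1 else 0)
      = (if 1 ≤ k then B m (k-1) s true else 0) + B m k s false := by
    rw [← split_occ_sum m k s]
    apply Finset.sum_congr rfl
    intro q hq
    obtain ⟨hct, hcf⟩ := hgt_facts hq
    congr 1
    rw [eq_iff_iff]
    have hg : hgt (q ++ [true, false]) = hgt q := by
      simp [hgt, List.count_append]
    rw [hg]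
    constructor
    · rintro ⟨h1, h2, -⟩; exact ⟨h1, h2⟩
    · rintro ⟨h1, h2⟩; exact ⟨h1, h2, by trivial⟩
  have e4 : (∑ q ∈ dps m, if 1 ≤ hgt q ∧ uuEvenMid q = k
      ∧ hgt (q ++ [false, false]) = 2*s ∧ (false = false) then 1 else 0)
      = B m k (s+1) true + B m k (s+1) false := by
    rw [show B m k (s+1) true + B m k (s+1) false
        = ((dps m).filter (fun q => uuEvenMid q = k ∧ hgt q = 2*(s+1))).card by
      rw [card_filter_split_lastB, B, B]
      congr 1
      · congr 1; ext q; simp only [Finset.mem_filter, and_assoc]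
      · congr 1; ext q; simp only [Finset.mem_filter, and_assoc]]
    rw [Finset.card_filter]
    apply Finset.sum_congr rfl
    intro q hq
    obtain ⟨hct, hcf⟩ := hgt_facts hq
    congr 1
    rw [eq_iff_iff]
    have hg : hgt (q ++ [false, false]) = hgt q - 2 := by
      simp [hgt, List.count_append]
      omega
    rw [hg]
    simp only [hgt] at *
    constructor
    · rintro ⟨h1, h2, h3, -⟩
      exact ⟨h2, by omega⟩
    · rintro ⟨h1, h2⟩
      exact ⟨by omega, h1, by omega, by trivial⟩
  rw [e2, e4]
  omega

lemma B_succ_true (m k s : ℕ) :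
    B (m+1) k s true
      = if 1 ≤ s then
          (((if 1 ≤ k then B m (k-1) (s-1) true else 0) + B m k (s-1) false)
            + (B m k s true + B m k s false))
        else 0 := by
  rw [B_split]
  have e2 : (∑ q ∈ dps m, if uuEvenMid q + (if lastB q = true then 1 else 0) = k
      ∧ hgt (q ++ [true, false]) = 2*s ∧ (false = true) then 1 else 0) = 0 := by
    apply Finset.sum_eq_zero
    intro q _
    simp
  have e4 : (∑ q ∈ dps m, if 1 ≤ hgt q ∧ uuEvenMid q = k
      ∧ hgt (q ++ [false, false]) = 2*s ∧ (false = true) then 1 else 0) = 0 := by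
    apply Finset.sum_eq_zero
    intro q _
    simp
  rw [e2, e4]
  rcases Nat.eq_zero_or_pos s with rfl | hs
  · rw [if_neg (by omega)]
    have e1 : (∑ q ∈ dps m, if uuEvenMid q + (if lastB q = true then 1 else 0) = k
        ∧ hgt (q ++ [true, true]) = 2*0 ∧ (true = true) then 1 else 0) = 0 := by
      apply Finset.sum_eq_zero
      intro q hq
      obtain ⟨hct, hcf⟩ := hgt_facts hq
      have hg : hgt (q ++ [true, true]) = hgt q + 2 := by
        simp [hgt, List.count_append]
        omega
      rw [if_neg]
      rintro ⟨-, h2, -⟩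
      rw [hg] at h2
      omega
    have e3 : (∑ q ∈ dps m, if 1 ≤ hgt q ∧ uuEvenMid q = k
        ∧ hgt (q ++ [false, true]) = 2*0 ∧ (true = true) then 1 else 0) = 0 := by
      apply Finset.sum_eq_zero
      intro q hq
      obtain ⟨hct, hcf⟩ := hgt_facts hq
      have hg : hgt (q ++ [false, true]) = hgt q := by
        simp [hgt, List.count_append]
      rw [if_neg]
      rintro ⟨h1, -, h3, -⟩
      rw [hg] at h3
      omega
    rw [e1, e3]
  · obtain ⟨s', rfl⟩ : ∃ s', s = s' + 1 := ⟨s - 1, by omega⟩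
    rw [if_pos (by omega), show s' + 1 - 1 = s' from rfl]
    have e1 : (∑ q ∈ dps m, if uuEvenMid q + (if lastB q = true then 1 else 0) = k
        ∧ hgt (q ++ [true, true]) = 2*(s'+1) ∧ (true = true) then 1 else 0)
        = (if 1 ≤ k then B m (k-1) s' true else 0) + B m k s' false := by
      rw [← split_occ_sum m k s']
      apply Finset.sum_congr rfl
      intro q hq
      obtain ⟨hct, hcf⟩ := hgt_facts hq
      congr 1
      rw [eq_iff_iff]
      have hg : hgt (q ++ [true, true]) = hgt q + 2 := by
        simp [hgt, List.count_append]
        omega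
      rw [hg]
      constructor
      · rintro ⟨h1, h2, -⟩; exact ⟨h1, by omega⟩
      · rintro ⟨h1, h2⟩; exact ⟨h1, by omega, by trivial⟩
    have e3 : (∑ q ∈ dps m, if 1 ≤ hgt q ∧ uuEvenMid q = k
        ∧ hgt (q ++ [false, true]) = 2*(s'+1) ∧ (true = true) then 1 else 0)
        = B m k (s'+1) true + B m k (s'+1) false := by
      rw [show B m k (s'+1) true + B m k (s'+1) false
          = ((dps m).filter (fun q => uuEvenMid q = k ∧ hgt q = 2*(s'+1))).card by
        rw [card_filter_split_lastB, B, B]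
        congr 1
        · congr 1; ext q; simp only [Finset.mem_filter, and_assoc]
        · congr 1; ext q; simp only [Finset.mem_filter, and_assoc]]
      rw [Finset.card_filter]
      apply Finset.sum_congr rfl
      intro q hq
      obtain ⟨hct, hcf⟩ := hgt_facts hq
      congr 1
      rw [eq_iff_iff]
      have hg : hgt (q ++ [false, true]) = hgt q := by
        simp [hgt, List.count_append]
      rw [hg]
      constructor
      · rintro ⟨-, h2, h3, -⟩; exact ⟨h2, h3⟩
      · rintro ⟨h1, h2⟩; exact ⟨by omega, h1, h2, by trivial⟩
    rw [e1, e3]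
    omega


lemma B_true_zero (m k : ℕ) : B (m+1) k 0 true = 0 := by
  rw [B_succ_true, if_neg (by omega)]

lemma B_shift (m k s : ℕ) : B (m+1) k (s+1) true = B (m+1) k s false := by
  rw [B_succ_true, if_pos (by omega), show s + 1 - 1 = s from rfl, B_succ_false]

lemma B_vanish : ∀ m, (∀ k s, k < s → B m k s false = 0)
    ∧ (∀ k s, k + 1 < s → B m k s true = 0) := by
  intro m
  induction m with
  | zero =>
    constructor
    · intro k s h
      rw [B_zero, if_neg (by omega)]
    · intro k s h
      rw [B_zero, if_neg (by simp)]
  | succ m ih =>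
    obtain ⟨ihf, iht⟩ := ih
    constructor
    · intro k s h
      rw [B_succ_false, ihf k s h, ihf k (s+1) (by omega), iht k (s+1) (by omega)]
      rcases Nat.eq_zero_or_pos k with rfl | hk
      · simp
      · rw [if_pos (show 1 ≤ k by omega), iht (k-1) s (by omega)]
    · intro k s h
      rw [B_succ_true]
      rcases Nat.eq_zero_or_pos s with rfl | hs
      · rw [if_neg (by omega)]
      · rw [if_pos (show 1 ≤ s by omega), ihf k (s-1) (by omega), ihf k s (by omega),
          iht k s (by omega)]
        rcases Nat.eq_zero_or_pos k with rfl | hk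
        · simp
        · rw [if_pos (show 1 ≤ k by omega), iht (k-1) (s-1) (by omega)]

lemma A_one (k l : ℕ) : A 1 k l = if k = 0 ∧ l = 0 then 1 else 0 := by
  rw [A, show cats 1 = {[0]} from rfl, Finset.filter_singleton]
  have h1 : desc [0] = 0 := by decide
  have h2 : lastD [0] = 0 := by decide
  rw [h1, h2]
  by_cases hk : k = 0 <;> by_cases hl : l = 0 <;> simp [hk, hl] <;> omega

lemma B_one_false (k s : ℕ) : B 1 k s false = if k = 0 ∧ s = 0 then 1 else 0 := by
  rw [show (1 : ℕ) = 0 + 1 from rfl, B_succ_false]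
  simp only [B_zero]
  by_cases hk : k = 0 <;> by_cases hs : s = 0 <;> simp [hk, hs]

lemma pascal' (l s : ℕ) :
    Nat.choose (l+1) s = Nat.choose l s + (if 1 ≤ s then Nat.choose l (s-1) else 0) := by
  rcases Nat.eq_zero_or_pos s with rfl | hs
  · simp
  · obtain ⟨s', rfl⟩ : ∃ s', s = s' + 1 := ⟨s - 1, by omega⟩
    rw [if_pos (show 1 ≤ s' + 1 by omega), Nat.choose_succ_succ,
      show s' + 1 - 1 = s' from rfl]
    simp only [Nat.succ_eq_add_one]
    omega

lemma main : ∀ m, 1 ≤ m → ∀ j s,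
    B m (j+s) s false = ∑ l ∈ Finset.range m, Nat.choose l s * A m j l := by
  intro m
  induction m with
  | zero => omega
  | succ m ih =>
    intro _ j s
    rcases Nat.eq_zero_or_pos m with rfl | hm
    · -- base case m+1 = 1
      rw [B_one_false, Finset.sum_range_one, A_one]
      rcases Nat.eq_zero_or_pos s with rfl | hs
      · rcases Nat.eq_zero_or_pos j with rfl | hj
        · simp
        · rw [if_neg (by omega), if_neg (by omega)]
          simp
      · rw [if_neg (by omega), show Nat.choose 0 s = 0 by
          obtain ⟨s', rfl⟩ : ∃ s', s = s' + 1 := ⟨s - 1, by omega⟩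
          exact Nat.choose_zero_succ s']
        simp
    · -- inductive step
      have IH := ih hm
      obtain ⟨m', rfl⟩ : ∃ m', m = m' + 1 := ⟨m - 1, by omega⟩
      rw [B_succ_false]
      -- term 2 (the if 1 ≤ j+s term)
      have hT2 : (if 1 ≤ j + s then B (m'+1) (j+s-1) s true else 0)
          = ∑ l ∈ Finset.range (m'+1),
              (if 1 ≤ s then Nat.choose l (s-1) * A (m'+1) j l else 0) := by
        rcases Nat.eq_zero_or_pos s with rfl | hs
        · simp only [if_neg (show ¬ (1:ℕ) ≤ 0 by omega), Finset.sum_const_zero]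
          rcases Nat.eq_zero_or_pos j with rfl | hj
          · rw [if_neg (by omega)]
          · rw [if_pos (by omega), show j + 0 - 1 = j - 1 from rfl, B_true_zero]
        · obtain ⟨s', rfl⟩ : ∃ s', s = s' + 1 := ⟨s - 1, by omega⟩
          rw [if_pos (by omega), show j + (s'+1) - 1 = j + s' from rfl, B_shift,
            IH j s']
          apply Finset.sum_congr rfl
          intro l _
          rw [if_pos (by omega), show s' + 1 - 1 = s' from rfl]
      have hT4 : B (m'+1) (j+s) (s+1) true
          = ∑ l ∈ Finset.range (m'+1), Nat.choose l s * A (m'+1) j l := by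
        rw [B_shift, IH j s]
      have hT3 : B (m'+1) (j+s) (s+1) false
          = ∑ l ∈ Finset.range (m'+1),
              (if 1 ≤ j then Nat.choose l (s+1) * A (m'+1) (j-1) l else 0) := by
        rcases Nat.eq_zero_or_pos j with rfl | hj
        · rw [show (0:ℕ) + s = s from by omega, (B_vanish (m'+1)).1 s (s+1) (by omega)]
          simp
        · obtain ⟨j', rfl⟩ : ∃ j', j = j' + 1 := ⟨j - 1, by omega⟩
          rw [show j' + 1 + s = j' + (s+1) from by omega, IH j' (s+1)]
          apply Finset.sum_congr rfl
          intro l _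
          rw [if_pos (by omega), show j' + 1 - 1 = j' from rfl]
      rw [hT2, hT4, hT3, IH j s]
      -- right-hand side
      have hRHS : ∀ l ∈ Finset.range (m'+1),
          (∑ x ∈ Finset.range (m'+1+1), Nat.choose x s *
            (if x ≤ l + 1 then
              (if x < l then (if 1 ≤ j then A (m'+1) (j-1) l else 0) else A (m'+1) j l)
             else 0))
          = Nat.choose l (s+1) * (if 1 ≤ j then A (m'+1) (j-1) l else 0)
            + (Nat.choose l s * A (m'+1) j l + Nat.choose (l+1) s * A (m'+1) j l) := by
        intro l hl
        rw [Finset.mem_range] at hl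
        rw [← Finset.sum_subset (Finset.range_subset_range.mpr (show l + 2 ≤ m' + 1 + 1 by omega))
          (fun x _ hx => by
            rw [Finset.mem_range] at hx
            rw [if_neg (by omega), mul_zero])]
        rw [Finset.sum_range_succ, Finset.sum_range_succ]
        rw [if_pos (show l + 1 ≤ l + 1 by omega), if_neg (show ¬ l + 1 < l by omega),
          if_pos (show l ≤ l + 1 by omega), if_neg (show ¬ l < l by omega)]
        have hin : ∀ x ∈ Finset.range l,
            Nat.choose x s * (if x ≤ l + 1 then
              (if x < l then (if 1 ≤ j then A (m'+1) (j-1) l else 0) else A (m'+1) j l)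
             else 0)
            = Nat.choose x s * (if 1 ≤ j then A (m'+1) (j-1) l else 0) := by
          intro x hx
          rw [Finset.mem_range] at hx
          rw [if_pos (by omega), if_pos (by omega)]
        rw [Finset.sum_congr rfl hin, ← Finset.sum_mul, sum_range_choose_eq]
        ring
      calc (∑ l ∈ Finset.range (m'+1),
              (if 1 ≤ s then Nat.choose l (s-1) * A (m'+1) j l else 0))
            + (∑ l ∈ Finset.range (m'+1), Nat.choose l s * A (m'+1) j l)
            + ((∑ l ∈ Finset.range (m'+1), Nat.choose l s * A (m'+1) j l)
            + (∑ l ∈ Finset.range (m'+1),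
              (if 1 ≤ j then Nat.choose l (s+1) * A (m'+1) (j-1) l else 0)))
          = ∑ l ∈ Finset.range (m'+1),
              ((if 1 ≤ s then Nat.choose l (s-1) * A (m'+1) j l else 0)
               + Nat.choose l s * A (m'+1) j l
               + (Nat.choose l s * A (m'+1) j l
               + (if 1 ≤ j then Nat.choose l (s+1) * A (m'+1) (j-1) l else 0))) := by
            rw [Finset.sum_add_distrib, Finset.sum_add_distrib, Finset.sum_add_distrib]
        _ = ∑ l ∈ Finset.range (m'+1),
              (Nat.choose l (s+1) * (if 1 ≤ j then A (m'+1) (j-1) l else 0)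
               + (Nat.choose l s * A (m'+1) j l + Nat.choose (l+1) s * A (m'+1) j l)) := by
            apply Finset.sum_congr rfl
            intro l _
            rw [pascal' l s]
            by_cases h1 : 1 ≤ s <;> by_cases h2 : 1 ≤ j <;>
              simp only [h1, h2, if_true, if_false] <;> ring
        _ = ∑ x ∈ Finset.range (m'+1+1), Nat.choose x s * A (m'+1+1) j x := by
            rw [← Finset.sum_congr rfl hRHS]
            rw [Finset.sum_comm]
            apply Finset.sum_congr rfl
            intro x _
            rw [A_succ (m'+1) (by omega) j x, Finset.mul_sum]

lemma cat_count (n k : ℕ) (hn : 1 ≤ n) (hk : 1 ≤ k) :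
    Nat.card {w : List ℕ | w ∈ CatalanWord n ∧ wAscRuns w = k}
      = ∑ l ∈ Finset.range n, A n (k-1) l := by
  have hset : {w : List ℕ | w ∈ CatalanWord n ∧ wAscRuns w = k}
      = ↑((cats n).filter (fun w => desc w = k - 1)) := by
    ext w
    simp only [Set.mem_setOf_eq, Finset.coe_filter, Finset.mem_coe, Finset.mem_filter]
    rw [mem_cats_iff hn]
    have : wAscRuns w = 1 + desc w := rfl
    constructor
    · rintro ⟨h1, h2⟩
      exact ⟨h1, by omega⟩
    · rintro ⟨h1, h2⟩
      exact ⟨h1, by omega⟩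
  rw [hset, Nat.card_coe_set_eq, Set.ncard_coe_finset]
  rw [Finset.card_eq_sum_card_fiberwise (f := lastD) (t := Finset.range n)
    (fun w hw => Finset.mem_range.mpr (lastD_lt_mem_cats (Finset.mem_filter.mp hw).1))]
  apply Finset.sum_congr rfl
  intro l _
  rw [A, Finset.filter_filter]

lemma dyck_count (n c : ℕ) (hn : 1 ≤ n) :
    Nat.card {p : List Bool | p ∈ DyckPath n ∧ uuEvenMid p = c} = B n c 0 false := by
  have hset : {p : List Bool | p ∈ DyckPath n ∧ uuEvenMid p = c}
      = ↑((dps n).filter (fun p => uuEvenMid p = c ∧ hgt p = 2*0 ∧ lastB p = false)) := by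
    ext p
    simp only [Set.mem_setOf_eq, Finset.coe_filter, Finset.mem_coe, Finset.mem_filter]
    rw [mem_dps_iff]
    constructor
    · rintro ⟨⟨hlen, hct, hpre⟩, hocc⟩
      have hok : ok p := by
        intro i
        rcases le_or_gt i (2*n) with h | h
        · exact hpre i h
        · rw [List.take_of_length_le (by omega)]
          have := hpre (2*n) le_rfl
          rwa [List.take_of_length_le (by omega)] at this
      have hcf : p.count false = n := by
        have := count_tf p
        omega
      refine ⟨⟨hlen, hok⟩, hocc, by rw [hgt, hct, hcf]; omega, ?_⟩
      -- lastB p = false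
      by_contra hb
      rw [Bool.not_eq_false] at hb
      have hq : (p.take (2*n - 1)).length = 2*n - 1 := by
        rw [List.length_take]; omega
      have hd : (p.drop (2*n - 1)).length = 1 := by
        rw [List.length_drop]; omega
      obtain ⟨a, ha⟩ := List.length_eq_one_iff.mp hd
      have hdec : p.take (2*n-1) ++ [a] = p := by
        rw [← ha]; exact List.take_append_drop _ _
      have hgd : p.getD (2*n-1) false = a := by
        conv_lhs => rw [← hdec]
        rw [List.getD_append_right _ _ _ _ (by omega)]
        simp [hq]
      have hba : a = true := by
        rw [lastB, hlen, show 2*n - 1 = 2*n - 1 from rfl] at hb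
        rw [← hgd]; exact hb
      subst hba
      have hcount : p.count false = (p.take (2*n-1)).count false := by
        conv_lhs => rw [← hdec]
        simp [List.count_append]
      have hcountt : p.count true = (p.take (2*n-1)).count true + 1 := by
        conv_lhs => rw [← hdec]
        simp [List.count_append]
      have := hpre (2*n-1) (by omega)
      have hctf := count_tf (p.take (2*n-1))
      omega
    · rintro ⟨⟨hlen, hok⟩, hocc, hh, hlb⟩
      have hcf : p.count false ≤ p.count true := ok_self hok
      have hct := count_tf p
      rw [hgt] at hh
      refine ⟨⟨hlen, by omega, fun i _ => hok i⟩, hocc⟩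
  rw [hset, Nat.card_coe_set_eq, Set.ncard_coe_finset, B]

end CatDyck

/-- The number of Catalan words of length `n` with exactly `k` runs of weak ascents
equals the number of Dyck paths of semilength `n` with exactly `k-1` occurrences of
`UU` whose midpoint lies at even height. -/
theorem wAscRuns_eq_uuEvenMid (n k : ℕ) (hn : 1 ≤ n) (hk : 1 ≤ k) :
    Nat.card {w : List ℕ | w ∈ CatalanWord n ∧ wAscRuns w = k} =
      Nat.card {p : List Bool | p ∈ DyckPath n ∧ uuEvenMid p = k - 1} := by
  rw [CatDyck.cat_count n k hn hk, CatDyck.dyck_count n (k-1) hn]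
  have hm := CatDyck.main n hn (k-1) 0
  rw [Nat.add_zero] at hm
  rw [hm]
  apply Finset.sum_congr rfl
  intro l _
  rw [Nat.choose_zero_right, one_mul]
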